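/- arXiv:1504.08127 — 4 statements merged into one kernel-verified Lean document; each statement's English description precedes it below -/
import Mathlib

section
/- For the elliptic curve E₁ : y² = x³ + x² + x over ℚ (Cremona 48a4), the point A = (i, i) with i² = -1 lies on E₁ over ℚ(i), has order 8, its complex conjugate satisfies Ā = 3A, and 4A = (0,0). -/
open WeierstrassCurve Complex

def E48a4 : Affine ℂ := { a₁ := 0, a₂ := 1, a₃ := 0, a₄ := 1, a₆ := 0 }

lemma e_hA : E48a4.Nonsingular I I := by
  rw [Affine.nonsingular_iff, Affine.equation_iff]
  simp [E48a4]
  exact Or.inr fun h2 => I_ne_zero (by linear_combination h2/2)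

lemma e_hA' : E48a4.Nonsingular (-I) (-I) := by
  rw [Affine.nonsingular_iff, Affine.equation_iff]
  simp [E48a4]
  refine ⟨by linear_combination I*I_sq, Or.inr fun h2 => I_ne_zero (by linear_combination -h2/2)⟩

lemma e_hT : E48a4.Nonsingular 0 0 := by
  rw [Affine.nonsingular_iff, Affine.equation_iff]
  simp [E48a4]

lemma e_h2 : E48a4.Nonsingular (-1) I := by
  rw [Affine.nonsingular_iff, Affine.equation_iff]
  simp [E48a4]
  refine ⟨by ring, Or.inr fun h2 => I_ne_zero (by linear_combination h2/2)⟩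

lemma some_congr {x₁ y₁ x₂ y₂ : ℂ} {h₁ : E48a4.Nonsingular x₁ y₁} {h₂ : E48a4.Nonsingular x₂ y₂}
    (hx : x₁ = x₂) (hy : y₁ = y₂) : Affine.Point.some _ _ h₁ = Affine.Point.some _ _ h₂ := by
  subst hx; subst hy; rfl

lemma yne : (I : ℂ) ≠ E48a4.negY I I := by
  simp [Affine.negY, E48a4]
  intro h2; exact I_ne_zero (by linear_combination h2/2)

lemma slopeAA : E48a4.slope I I I I = 1 + I := by
  rw [Affine.slope_of_Y_ne rfl yne]
  simp [E48a4, Affine.negY]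
  rw [div_eq_iff (by simp [I_ne_zero])]
  linear_combination -2*I_sq

lemma add_AA : Affine.Point.some _ _ e_hA + Affine.Point.some _ _ e_hA = Affine.Point.some _ _ e_h2 := by
  rw [Affine.Point.add_of_Y_ne yne]
  refine some_congr ?_ ?_
  · rw [slopeAA]; simp [E48a4, Affine.addX]; linear_combination I_sq
  · rw [slopeAA]; simp [E48a4, Affine.addY, Affine.negAddY, Affine.addX, Affine.negY]
    linear_combination (-I)*I_sq

lemma slopeQA : E48a4.slope (-1) I I I = 0 := by
  rw [Affine.slope_of_X_ne (by intro h; simpa using congrArg Complex.im h)]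
  simp

lemma add_QA : Affine.Point.some _ _ e_h2 + Affine.Point.some _ _ e_hA = Affine.Point.some _ _ e_hA' := by
  rw [Affine.Point.add_of_X_ne (by intro h; simpa using congrArg Complex.im h)]
  refine some_congr ?_ ?_
  · rw [slopeQA]; simp [E48a4, Affine.addX]
  · rw [slopeQA]; simp [E48a4, Affine.addY, Affine.negAddY, Affine.addX, Affine.negY]

lemma yne2 : (I : ℂ) ≠ E48a4.negY (-1) I := by
  simp [Affine.negY, E48a4]
  intro h2; exact I_ne_zero (by linear_combination h2/2)

lemma slopeQQ : E48a4.slope (-1) (-1) I I = -I := by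
  rw [Affine.slope_of_Y_ne rfl yne2]
  simp [E48a4, Affine.negY]
  rw [div_eq_iff (by simp [I_ne_zero])]
  linear_combination 2*I_sq

lemma add_QQ : Affine.Point.some _ _ e_h2 + Affine.Point.some _ _ e_h2 = Affine.Point.some _ _ e_hT := by
  rw [Affine.Point.add_of_Y_ne yne2]
  refine some_congr ?_ ?_
  · rw [slopeQQ]; simp [E48a4, Affine.addX]
  · rw [slopeQQ]; simp [E48a4, Affine.addY, Affine.negAddY, Affine.addX, Affine.negY]

lemma add_TT : Affine.Point.some _ _ e_hT + Affine.Point.some _ _ e_hT = 0 :=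
  Affine.Point.add_self_of_Y_eq (by simp [Affine.negY, E48a4])

/-- On `E₁ : y² = x³ + x² + x`, the point `A = (i, i)` lies on the curve, has order `8`,
its complex conjugate `Ā = (-i, -i)` satisfies `Ā = 3 A`, and `4 A = (0, 0)`. -/
theorem E48a4_point_I :
    ∃ (hA : E48a4.Nonsingular I I) (hA' : E48a4.Nonsingular (-I) (-I))
      (hT : E48a4.Nonsingular 0 0),
      addOrderOf (Affine.Point.some _ _ hA) = 8 ∧
      Affine.Point.some _ _ hA' = (3 : ℤ) • Affine.Point.some _ _ hA ∧
      (4 : ℤ) • Affine.Point.some _ _ hA = Affine.Point.some _ _ hT := by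
  refine ⟨e_hA, e_hA', e_hT, ?_, ?_, ?_⟩
  · haveI : Fact (Nat.Prime 2) := ⟨by norm_num⟩
    have s2 : (2 : ℕ) • Affine.Point.some _ _ e_hA = Affine.Point.some _ _ e_h2 := by
      rw [two_nsmul, add_AA]
    have h4 : (2^2 : ℕ) • Affine.Point.some _ _ e_hA = Affine.Point.some _ _ e_hT := by
      rw [show (2^2:ℕ) = 2*2 by norm_num, mul_nsmul, s2, two_nsmul, add_QQ]
    have h8 : (2^3 : ℕ) • Affine.Point.some _ _ e_hA = 0 := by
      rw [show (2^3:ℕ) = 2^2*2 by norm_num, mul_nsmul, h4, two_nsmul, add_TT]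
    have := addOrderOf_eq_prime_pow (p := 2) (n := 2) (x := Affine.Point.some _ _ e_hA)
      (by rw [h4]; exact Affine.Point.some_ne_zero e_hT) h8
    simpa using this
  · rw [show (3:ℤ) = 2+1 by norm_num, add_zsmul, two_zsmul, one_zsmul, add_AA, add_QA]
  · rw [show (4:ℤ) = 2+2 by norm_num, add_zsmul, two_zsmul, add_AA, add_QQ]
end

section
/- The change of variables X = 4x(x+y+k), Y = 8x²(x+y+k) transforms the curve x + 1/x + y + 1/y + k = 0 into the Weierstrass form Y² + 2kXY + 8kY = X³ + 4X², and the point Q = (0, 0) on this Weierstrass curve has order 4 (for k ∉ {0, ±4}). -/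
open WeierstrassCurve

/-- The Weierstrass curve `C_k : Y² + 2kXY + 8kY = X³ + 4X²`. -/
def Ck (k : ℚ) : Affine ℚ := { a₁ := 2 * k, a₂ := 4, a₃ := 8 * k, a₄ := 0, a₆ := 0 }

lemma some_eq_some' {F : Type*} [Field F] {W : Affine F} {x₁ y₁ x₂ y₂ : F}
    (hx : x₁ = x₂) (hy : y₁ = y₂) (h₁ : W.Nonsingular x₁ y₁) (h₂ : W.Nonsingular x₂ y₂) :
    Affine.Point.some _ _ h₁ = Affine.Point.some _ _ h₂ := by subst hx; subst hy; rfl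

/-- For `k ∉ {0, 4, -4}`: (1) the change of variables `X = 4x(x+y+k)`, `Y = 8x²(x+y+k)`
maps solutions of `x + 1/x + y + 1/y + k = 0` with `x, y ≠ 0` to the Weierstrass curve
`Y² + 2kXY + 8kY = X³ + 4X²`; (2) the point `Q = (0, 0)` on this curve has order exactly `4`. -/
theorem change_of_variables_and_order_four (k : ℚ) (hk0 : k ≠ 0) (hk4 : k ≠ 4)
    (hk4' : k ≠ -4) :
    (∀ x y : ℂ, x ≠ 0 → y ≠ 0 → x + 1 / x + y + 1 / y + (k : ℂ) = 0 →
      (8 * x ^ 2 * (x + y + k)) ^ 2 +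
          2 * k * (4 * x * (x + y + k)) * (8 * x ^ 2 * (x + y + k)) +
          8 * k * (8 * x ^ 2 * (x + y + k)) =
        (4 * x * (x + y + k)) ^ 3 + 4 * (4 * x * (x + y + k)) ^ 2) ∧
    ∃ hQ : (Ck k).Nonsingular 0 0, addOrderOf (Affine.Point.some _ _ hQ) = 4 := by
  have hk8 : (8 * k : ℚ) ≠ 0 := by simpa using hk0
  constructor
  · intro x y hx hy h
    have h' : x ^ 2 * y + x * y ^ 2 + x + y + k * (x * y) = 0 := by
      field_simp at h
      linear_combination h
    linear_combination (-(64 * x ^ 2 * (x + y + (k : ℂ)))) * h'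
  · have hQ : (Ck k).Nonsingular 0 0 := by
      rw [Affine.nonsingular_zero]
      exact ⟨rfl, Or.inl hk8⟩
    refine ⟨hQ, ?_⟩
    have hnegY0 : (Ck k).negY 0 0 = -(8 * k) := by
      simp [Affine.negY, Ck]
    have hy0 : (0 : ℚ) ≠ (Ck k).negY 0 0 := by
      rw [hnegY0]; simpa using hk8.symm
    have h2 : (Ck k).Nonsingular (-4) 0 := by
      rw [Affine.nonsingular_iff']
      refine ⟨(Affine.equation_iff _ _).mpr ?_, Or.inl ?_⟩
      · show (0:ℚ)^2 + 2*k*(-4)*0 + 8*k*0 = (-4:ℚ)^3 + 4*(-4)^2 + 0*(-4) + 0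
        ring
      · show 2*k*0 - (3*(-4:ℚ)^2 + 2*4*(-4) + 0) ≠ 0
        norm_num
    have hslope : (Ck k).slope 0 0 0 0 = 0 := by
      rw [Affine.slope_of_Y_ne rfl hy0]
      show (3*(0:ℚ)^2 + 2*4*0 + 0 - 2*k*0) / _ = 0
      norm_num
    have hx : (Ck k).addX 0 0 ((Ck k).slope 0 0 0 0) = -4 := by
      rw [hslope]
      show (0:ℚ)^2 + 2*k*0 - 4 - 0 - 0 = -4
      ring
    have hy : (Ck k).addY 0 0 0 ((Ck k).slope 0 0 0 0) = 0 := by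
      rw [Affine.addY, Affine.negAddY, hx, hslope, Affine.negY]
      show -(0*(-4-0)+0) - 2*k*(-4) - 8*k = 0
      ring
    have twoP : Affine.Point.some _ _ hQ + Affine.Point.some _ _ hQ = Affine.Point.some _ _ h2 :=
      (Affine.Point.add_self_of_Y_ne hy0).trans (some_eq_some' hx hy _ h2)
    have hnegY2 : (0 : ℚ) = (Ck k).negY (-4) 0 := by
      show (0:ℚ) = -0 - 2*k*(-4) - 8*k
      ring
    have fourP : Affine.Point.some _ _ h2 + Affine.Point.some _ _ h2 = 0 :=
      Affine.Point.add_of_Y_eq rfl hnegY2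
    have h2smul : (2 : ℕ) • Affine.Point.some _ _ hQ = Affine.Point.some _ _ h2 := by
      rw [two_nsmul, twoP]
    have key := addOrderOf_eq_prime_pow (p := 2) (n := 1) (x := Affine.Point.some _ _ hQ) ?_ ?_
    · simpa using key
    · rw [pow_one, h2smul]
      exact Affine.Point.some_ne_zero h2
    · show (2 ^ 2 : ℕ) • Affine.Point.some _ _ hQ = 0
      rw [show (2^2 : ℕ) = 2 * 2 by norm_num, mul_nsmul, h2smul, two_nsmul, fourP]
end

section
/- The change of variables X = x(x+y+3)+1, Y = x(x+1)(x+y+3)+1 transforms the curve x + 1/x + y + 1/y + 3 = 0 into the Weierstrass form Y² + XY = X³ + X. -/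
/-- If `(x, y) ∈ (ℂˣ)²` satisfies `x + 1/x + y + 1/y + 3 = 0`, then
`X = x(x+y+3) + 1` and `Y = x(x+1)(x+y+3) + 1` satisfy `Y² + XY = X³ + X`. -/
theorem change_of_variables_21 (x y : ℂ) (hx : x ≠ 0) (hy : y ≠ 0)
    (h : x + 1 / x + y + 1 / y + 3 = 0) :
    (x * (x + 1) * (x + y + 3) + 1) ^ 2 +
        (x * (x + y + 3) + 1) * (x * (x + 1) * (x + y + 3) + 1) =
      (x * (x + y + 3) + 1) ^ 3 + (x * (x + y + 3) + 1) := by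
  have h' : x^2*y + x + x*y^2 + x*y*3 + y = 0 := by
    field_simp at h; linear_combination h
  linear_combination (-(x^3) - x^2*y - 3*x^2) * h'
end

section
/- Let L(E_{2,d}, s) = (1 - d^{1-s})ζ(s)ζ(s-1) for an integer d ≥ 2. Then for F = -4L₀ + (72/(7·21^s))(7·21^s - 21·7^s - 7·3^s + 21)ζ(s)ζ(s-1) (as a function of s), the Eisenstein contribution G(s) = (72/(7·21^s))(7·21^s - 21·7^s - 7·3^s + 21)ζ(s)ζ(s-1) satisfies G(0) = 0 and G'(0) = -6 log 7. -/
open Complex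

/-- The Eisenstein contribution
`G(s) = (72/7) · 21^{-s} · (7·21^s - 21·7^s - 7·3^s + 21) · ζ(s) · ζ(s-1)`. -/
noncomputable def eisContrib (s : ℂ) : ℂ :=
  72 / 7 * (21 : ℂ) ^ (-s) * (7 * (21 : ℂ) ^ s - 21 * (7 : ℂ) ^ s - 7 * (3 : ℂ) ^ s + 21) *
    riemannZeta s * riemannZeta (s - 1)

lemma analyticAt_zeta {z : ℂ} (hz : z ≠ 1) : AnalyticAt ℂ riemannZeta z := by
  rw [analyticAt_iff_eventually_differentiableAt]
  filter_upwards [(isOpen_compl_singleton (x := (1 : ℂ))).eventually_mem hz] with w hw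
  exact differentiableAt_riemannZeta hw

lemma zeta_neg_one : riemannZeta (-1) = -1 / 12 := by
  have h := riemannZeta_neg_nat_eq_bernoulli 1
  norm_num [bernoulli] at h ⊢
  convert h using 2

/-- `G` is holomorphic at `s = 0`, with `G(0) = 0` and `G'(0) = -6 log 7`. -/
theorem eisContrib_at_zero :
    AnalyticAt ℂ eisContrib 0 ∧ eisContrib 0 = 0 ∧
      deriv eisContrib 0 = -6 * Real.log 7 := by
  have hval : eisContrib 0 = 0 := by
    simp [eisContrib]
  refine ⟨?_, hval, ?_⟩
  · have h21 : (21 : ℂ) ∈ Complex.slitPlane := by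
      simp [Complex.mem_slitPlane_iff]
    have h7 : (7 : ℂ) ∈ Complex.slitPlane := by
      simp [Complex.mem_slitPlane_iff]
    have h3 : (3 : ℂ) ∈ Complex.slitPlane := by
      simp [Complex.mem_slitPlane_iff]
    have hz1 : AnalyticAt ℂ riemannZeta (0 : ℂ) := analyticAt_zeta (by norm_num)
    have hz2 : AnalyticAt ℂ (fun s => riemannZeta (s - 1)) 0 := by
      have := (analyticAt_zeta (z := (0:ℂ) - 1) (by norm_num)).comp
        (f := fun s : ℂ => s - 1) (x := 0)
        (by exact analyticAt_id.sub analyticAt_const)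
      simpa [Function.comp_def] using this
    exact ((((analyticAt_const.mul
        ((analyticAt_const.cpow analyticAt_id.neg h21))).mul
        (((analyticAt_const.mul (analyticAt_const.cpow analyticAt_id h21)).sub
          (analyticAt_const.mul (analyticAt_const.cpow analyticAt_id h7))).sub
          (analyticAt_const.mul (analyticAt_const.cpow analyticAt_id h3)) |>.add
          analyticAt_const)).mul hz1).mul hz2)
  · -- derivative computation
    have hid : HasDerivAt (fun s : ℂ => s) 1 0 := hasDerivAt_id 0
    have h21 : HasDerivAt (fun s : ℂ => (21 : ℂ) ^ s) (Complex.log 21) 0 := by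
      simpa using hid.const_cpow (c := 21) (Or.inl (by norm_num))
    have h21n : HasDerivAt (fun s : ℂ => (21 : ℂ) ^ (-s)) (-Complex.log 21) 0 := by
      simpa using (hid.neg).const_cpow (c := 21) (Or.inl (by norm_num))
    have h7 : HasDerivAt (fun s : ℂ => (7 : ℂ) ^ s) (Complex.log 7) 0 := by
      simpa using hid.const_cpow (c := 7) (Or.inl (by norm_num))
    have h3 : HasDerivAt (fun s : ℂ => (3 : ℂ) ^ s) (Complex.log 3) 0 := by
      simpa using hid.const_cpow (c := 3) (Or.inl (by norm_num))
    have hz1 : HasDerivAt riemannZeta (deriv riemannZeta 0) 0 :=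
      (differentiableAt_riemannZeta (by norm_num)).hasDerivAt
    have hz2 : HasDerivAt (fun s : ℂ => riemannZeta (s - 1)) (deriv riemannZeta (-1)) 0 := by
      have := ((differentiableAt_riemannZeta (s := (0:ℂ) - 1) (by norm_num)).hasDerivAt).comp 0
        (hid.sub_const 1)
      simpa [Function.comp_def] using this
    have hf : HasDerivAt
        (fun s : ℂ => 7 * (21 : ℂ) ^ s - 21 * (7 : ℂ) ^ s - 7 * (3 : ℂ) ^ s + 21)
        (7 * Complex.log 21 - 21 * Complex.log 7 - 7 * Complex.log 3) 0 := by
      simpa using (((h21.const_mul 7).sub (h7.const_mul 21)).sub (h3.const_mul 7)).add_const 21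
    have hG : HasDerivAt eisContrib
        ((((72 / 7 * -Complex.log 21) *
            (7 * (21:ℂ)^(0:ℂ) - 21 * (7:ℂ)^(0:ℂ) - 7 * (3:ℂ)^(0:ℂ) + 21) +
          (72 / 7 * (21:ℂ)^(-(0:ℂ))) *
            (7 * Complex.log 21 - 21 * Complex.log 7 - 7 * Complex.log 3)) * riemannZeta 0 +
          (72 / 7 * (21:ℂ)^(-(0:ℂ)) *
            (7 * (21:ℂ)^(0:ℂ) - 21 * (7:ℂ)^(0:ℂ) - 7 * (3:ℂ)^(0:ℂ) + 21)) *
            deriv riemannZeta 0) * riemannZeta (0 - 1) +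
          (72 / 7 * (21:ℂ)^(-(0:ℂ)) *
            (7 * (21:ℂ)^(0:ℂ) - 21 * (7:ℂ)^(0:ℂ) - 7 * (3:ℂ)^(0:ℂ) + 21) * riemannZeta 0) *
            deriv riemannZeta (-1)) 0 := by
      exact (((h21n.const_mul (72/7)).mul hf).mul hz1).mul hz2
    have hd := hG.deriv
    rw [hd]
    have e21 : Complex.log 21 = (Real.log 21 : ℂ) := by
      rw [show (21:ℂ) = ((21:ℝ):ℂ) by norm_num, Complex.ofReal_log (by norm_num)]
    have e7 : Complex.log 7 = (Real.log 7 : ℂ) := by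
      rw [show (7:ℂ) = ((7:ℝ):ℂ) by norm_num, Complex.ofReal_log (by norm_num)]
    have e3 : Complex.log 3 = (Real.log 3 : ℂ) := by
      rw [show (3:ℂ) = ((3:ℝ):ℂ) by norm_num, Complex.ofReal_log (by norm_num)]
    have elog : Real.log 21 = Real.log 3 + Real.log 7 := by
      rw [← Real.log_mul (by norm_num) (by norm_num)]; norm_num
    rw [riemannZeta_zero]
    have : riemannZeta ((0 : ℂ) - 1) = -1 / 12 := by
      norm_num [zeta_neg_one]
    rw [this, e21, e7, e3, elog]
    push_cast
    ring_nf
    simp [Complex.cpow_zero]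
    ring
end
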